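/- For unbiased dichotomic qubit observables A_a(±) = (1/2)(I ± a·σ) with ‖a‖ ≤ 1, and with the known criterion that A_a and A_b are jointly measurable iff ‖a+b‖ + ‖a−b‖ ≤ 2: for 0 ≤ λ ≤ 1, the set of unbiased observables jointly measurable with every member of A_λ = {A_a : ‖a‖ ≤ λ} is exactly A_{√(1−λ²)}, i.e., A_b is jointly measurable with every A_a with ‖a‖ ≤ λ if and only if ‖b‖ ≤ √(1−λ²). -/

import Mathlib

/-- Busch's criterion: for unbiased qubit observables `A_a`, with joint measurability of
`A_a` and `A_b` given by `‖a+b‖ + ‖a−b‖ ≤ 2`, the observable `A_b` is jointly measurable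
with every `A_a`, `‖a‖ ≤ λ`, iff `‖b‖ ≤ √(1 − λ²)`. -/
theorem busch_joint_measurability (jm : EuclideanSpace ℝ (Fin 3) → EuclideanSpace ℝ (Fin 3) → Prop)
    (h_crit : ∀ a b : EuclideanSpace ℝ (Fin 3), ‖a‖ ≤ 1 → ‖b‖ ≤ 1 →
      (jm a b ↔ ‖a + b‖ + ‖a - b‖ ≤ 2))
    (lam : ℝ) (hlam0 : 0 ≤ lam) (hlam1 : lam ≤ 1)
    (b : EuclideanSpace ℝ (Fin 3)) (hb : ‖b‖ ≤ 1) :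
    (∀ a : EuclideanSpace ℝ (Fin 3), ‖a‖ ≤ lam → jm a b) ↔
      ‖b‖ ≤ Real.sqrt (1 - lam ^ 2) := by
  constructor
  · intro hall
    -- pick a nonzero vector orthogonal to b, scaled to norm lam
    obtain ⟨v, hv_mem, hv_ne⟩ : ∃ v ∈ (ℝ ∙ b)ᗮ, v ≠ 0 := by
      apply Submodule.exists_mem_ne_zero_of_ne_bot
      intro hbot
      have h1 : Module.finrank ℝ (ℝ ∙ b) + Module.finrank ℝ ((ℝ ∙ b)ᗮ : Submodule ℝ (EuclideanSpace ℝ (Fin 3))) = 3 := by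
        rw [Submodule.finrank_add_finrank_orthogonal]
        simp [finrank_euclideanSpace_fin]
      have h2 : Module.finrank ℝ ((ℝ ∙ b)ᗮ : Submodule ℝ (EuclideanSpace ℝ (Fin 3))) = 0 := by
        rw [hbot]; simp
      have h3 : Module.finrank ℝ (ℝ ∙ b) ≤ 1 := by
        by_cases hb0 : b = 0
        · rw [hb0, Submodule.span_zero_singleton]; simp
        · rw [finrank_span_singleton hb0]
      omega
    have hvpos : (0:ℝ) < ‖v‖ := norm_pos_iff.mpr hv_ne
    set a : EuclideanSpace ℝ (Fin 3) := (lam / ‖v‖) • v with ha_def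
    have hna : ‖a‖ = lam := by
      rw [ha_def, norm_smul, Real.norm_eq_abs, abs_div, abs_of_nonneg hlam0,
        abs_of_pos hvpos, div_mul_cancel₀ _ (ne_of_gt hvpos)]
    have hinner : inner ℝ a b = (0:ℝ) := by
      have := hv_mem b (Submodule.mem_span_singleton_self b)
      rw [ha_def, real_inner_smul_left, real_inner_comm, this, mul_zero]
    have hjm := hall a (le_of_eq hna)
    have hle : ‖a + b‖ + ‖a - b‖ ≤ 2 :=
      (h_crit a b (hna ▸ hlam1) hb).mp hjm
    have hS0 : (0:ℝ) ≤ lam ^ 2 + ‖b‖ ^ 2 := by positivity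
    have hp : ‖a + b‖ = Real.sqrt (lam ^ 2 + ‖b‖ ^ 2) := by
      rw [show lam ^ 2 + ‖b‖ ^ 2 = ‖a + b‖ ^ 2 by
        rw [norm_add_sq_real, hinner, hna]; ring]
      exact (Real.sqrt_sq (norm_nonneg _)).symm
    have hq : ‖a - b‖ = Real.sqrt (lam ^ 2 + ‖b‖ ^ 2) := by
      rw [show lam ^ 2 + ‖b‖ ^ 2 = ‖a - b‖ ^ 2 by
        rw [norm_sub_sq_real, hinner, hna]; ring]
      exact (Real.sqrt_sq (norm_nonneg _)).symm
    have hsq : Real.sqrt (lam ^ 2 + ‖b‖ ^ 2) ≤ 1 := by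
      rw [hp, hq] at hle; linarith
    have hS1 : lam ^ 2 + ‖b‖ ^ 2 ≤ 1 := by
      have := Real.sq_sqrt hS0
      nlinarith [Real.sqrt_nonneg (lam ^ 2 + ‖b‖ ^ 2)]
    exact Real.le_sqrt_of_sq_le (by linarith)
  · intro hb2 a ha
    have h1 : (0:ℝ) ≤ 1 - lam ^ 2 := by nlinarith
    have hb2' : ‖b‖ ^ 2 ≤ 1 - lam ^ 2 := by
      have := Real.sq_sqrt h1
      nlinarith [norm_nonneg b, Real.sqrt_nonneg (1 - lam ^ 2)]
    have ha1 : ‖a‖ ≤ 1 := le_trans ha hlam1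
    rw [h_crit a b ha1 hb]
    set p := ‖a + b‖
    set q := ‖a - b‖
    set t : ℝ := inner ℝ a b
    have hp : p ^ 2 = ‖a‖^2 + 2*t + ‖b‖^2 := by rw [norm_add_sq_real]
    have hq : q ^ 2 = ‖a‖^2 - 2*t + ‖b‖^2 := by rw [norm_sub_sq_real]
    have hp0 : 0 ≤ p := norm_nonneg _
    have hq0 : 0 ≤ q := norm_nonneg _
    have hs : ‖a‖^2 + ‖b‖^2 ≤ 1 := by nlinarith [norm_nonneg a]
    have hs0 : (0:ℝ) ≤ ‖a‖^2 + ‖b‖^2 := by positivity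
    have hpq : p * q ≤ ‖a‖^2 + ‖b‖^2 := by
      nlinarith [sq_nonneg t, mul_nonneg hp0 hq0]
    nlinarith [sq_nonneg (p + q - 2)]
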